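/- Let p be a prime and M a finite group with Sylow p-subgroup S nonabelian of order p^3 such that Z(S) is normal in M and C_M(O_p(M)) ≤ O_p(M). Then S is normal in M. -/

import Mathlib

open Pointwise


/-- `P` is the largest normal `p`-subgroup `O_p(G)` of `G`. -/
def IsPCore (p : ℕ) {G : Type*} [Group G] (P : Subgroup G) : Prop :=
  P.Normal ∧ IsPGroup p ↥P ∧ ∀ Q : Subgroup G, Q.Normal → IsPGroup p ↥Q → Q ≤ P

/-- The center of a nonabelian group of order `p ^ 3` has order `p`. -/
lemma center_card_of_p3 {p : ℕ} [Fact p.Prime] {T : Type*} [Group T] [Finite T]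
    (h3 : Nat.card T = p ^ 3) (hna : ¬ ∀ a b : T, a * b = b * a) :
    Nat.card (Subgroup.center T) = p := by
  have hp : p.Prime := Fact.out
  have hnt : Nontrivial T := by
    rw [← Finite.one_lt_card_iff_nontrivial, h3]
    exact Nat.one_lt_pow (by norm_num) hp.one_lt
  have hpg : IsPGroup p T := IsPGroup.of_card h3
  have hcnt : Nontrivial (Subgroup.center T) := hpg.center_nontrivial
  have hdvd : Nat.card (Subgroup.center T) ∣ p ^ 3 :=
    h3 ▸ Subgroup.card_subgroup_dvd_card _
  obtain ⟨k, hk, hck⟩ := (Nat.dvd_prime_pow hp).mp hdvd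
  interval_cases k
  · exfalso
    have h1 : 1 < Nat.card (Subgroup.center T) := Finite.one_lt_card_iff_nontrivial.mpr hcnt
    rw [hck, pow_zero] at h1
    omega
  · simpa using hck
  · -- center of order p^2 : quotient is cyclic of order p, so T is abelian
    exfalso
    have hq : Nat.card (T ⧸ Subgroup.center T) = p := by
      have := Subgroup.card_eq_card_quotient_mul_card_subgroup (Subgroup.center T)
      rw [h3, hck] at this
      have hppos : 0 < p := hp.pos
      have : Nat.card (T ⧸ Subgroup.center T) * p ^ 2 = p ^ 3 := this.symm
      nlinarith [this]
    haveI : Fact p.Prime := ⟨hp⟩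
    haveI : IsCyclic (T ⧸ Subgroup.center T) := isCyclic_of_prime_card hq
    exact hna (fun a b =>
      commutative_of_cyclic_center_quotient (QuotientGroup.mk' (Subgroup.center T))
        (by rw [QuotientGroup.ker_mk']) a b)
  · -- center is everything : T is abelian
    exfalso
    have : Subgroup.center T = ⊤ := Subgroup.eq_top_of_card_eq _ (by rw [hck, h3])
    exact hna fun a b => by
      have ha : a ∈ Subgroup.center T := this ▸ Subgroup.mem_top a
      exact (Subgroup.mem_center_iff.mp ha b).symm

/-- Let `M` be a finite group with a nonabelian Sylow `p`-subgroup `S` of order `p^3`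
such that `Z(S)` is normal in `M` and `C_M(O_p(M)) ≤ O_p(M)`. Then `S` is normal
in `M`. -/
theorem sylow_normal_of_char_p
    {M : Type*} [Group M] [Finite M] {p : ℕ} [Fact p.Prime]
    (S : Sylow p M) (hcard : Nat.card ↥(S : Subgroup M) = p ^ 3)
    (hna : ¬ ∀ a b : ↥(S : Subgroup M), a * b = b * a)
    (hZ : ((S : Subgroup M) ⊓ Subgroup.centralizer ((S : Subgroup M) : Set M)).Normal)
    (P : Subgroup M) (hP : IsPCore p P)
    (hchar : Subgroup.centralizer (P : Set M) ≤ P) :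
    (S : Subgroup M).Normal := by
  classical
  have hp : p.Prime := Fact.out
  set Sg : Subgroup M := (S : Subgroup M) with hSg
  set Z : Subgroup M := Sg ⊓ Subgroup.centralizer (Sg : Set M) with hZdef
  -- Z is the image of the center of S
  have hZmap : Z = (Subgroup.center ↥Sg).map Sg.subtype := by
    ext z
    simp only [Subgroup.mem_map, Subgroup.mem_inf, Subgroup.mem_centralizer_iff,
      Subgroup.coe_subtype]
    constructor
    · rintro ⟨hzS, hzc⟩
      refine ⟨⟨z, hzS⟩, Subgroup.mem_center_iff.mpr ?_, rfl⟩
      intro g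
      ext
      exact hzc g g.2
    · rintro ⟨t, ht, rfl⟩
      refine ⟨t.2, fun h hh => ?_⟩
      have := Subgroup.mem_center_iff.mp ht ⟨h, hh⟩
      exact congrArg Subtype.val this
  have hZcard : Nat.card Z = p := by
    rw [hZmap]
    rw [Nat.card_congr (Subgroup.equivMapOfInjective _ _ Sg.subtype_injective).symm.toEquiv]
    exact center_card_of_p3 hcard hna
  -- every element of Z has p-th power 1
  have hzp : ∀ z ∈ Z, z ^ p = 1 := by
    intro z hz
    have : (⟨z, hz⟩ : Z) ^ p = 1 := by
      rw [← hZcard]; exact pow_card_eq_one'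
    have := congrArg (Subtype.val) this
    simpa using this
  -- commutators of elements of S lie in Z
  have hcomm : ∀ a ∈ Sg, ∀ b ∈ Sg, a * b * a⁻¹ * b⁻¹ ∈ Z := by
    intro a ha b hb
    have hqcard : Nat.card (↥Sg ⧸ Subgroup.center ↥Sg) = p ^ 2 := by
      have h1 := Subgroup.card_eq_card_quotient_mul_card_subgroup (Subgroup.center ↥Sg)
      have h2 : Nat.card (Subgroup.center ↥Sg) = p := center_card_of_p3 hcard hna
      rw [hcard, h2] at h1
      have hppos : 0 < p := hp.pos
      nlinarith [h1]
    have hcq := IsPGroup.commutative_of_card_eq_prime_sq hqcard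
    set A : ↥Sg := ⟨a, ha⟩
    set B : ↥Sg := ⟨b, hb⟩
    have hmem : A * B * A⁻¹ * B⁻¹ ∈ Subgroup.center ↥Sg := by
      have : ((A * B * A⁻¹ * B⁻¹ : ↥Sg) : ↥Sg ⧸ Subgroup.center ↥Sg) = 1 := by
        have := hcq ((A : ↥Sg ⧸ Subgroup.center ↥Sg)) (B : ↥Sg ⧸ Subgroup.center ↥Sg)
        -- the commutator maps to 1 in the abelian quotient
        simp only [QuotientGroup.mk_mul, QuotientGroup.mk_inv] at *
        rw [this]
        group
      rwa [← QuotientGroup.eq_one_iff]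
    rw [hZmap]
    exact ⟨A * B * A⁻¹ * B⁻¹, hmem, rfl⟩
  -- P is contained in S
  have hPle : P ≤ Sg := by
    obtain ⟨Q, hQ⟩ := hP.2.1.exists_le_sylow
    obtain ⟨g, hg⟩ := MulAction.exists_smul_eq M Q S
    intro x hx
    have h1 : MulAut.conj g • P = P := Subgroup.Normal.conj_smul_eq_self g P (h := hP.1)
    have h2 : (MulAut.conj g • (Q : Subgroup M)) = Sg := by
      rw [← Sylow.pointwise_smul_def, ← Sylow.smul_def, hg]
    rw [← h2]
    have : x ∈ MulAut.conj g • P := h1.symm ▸ hx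
    exact Subgroup.pointwise_smul_le_pointwise_smul_iff.mpr hQ this
  -- the stability subgroup K
  set K : Subgroup M :=
    { carrier := {m | (∀ z ∈ Z, m * z = z * m) ∧ ∀ x ∈ P, x⁻¹ * m⁻¹ * x * m ∈ Z}
      one_mem' := ⟨fun z _ => by rw [one_mul, mul_one], fun x hx => by
        simpa using Z.one_mem⟩
      mul_mem' := by
        rintro m n ⟨hm1, hm2⟩ ⟨hn1, hn2⟩
        refine ⟨fun z hz => ?_, fun x hx => ?_⟩
        · rw [mul_assoc, hn1 z hz, ← mul_assoc, hm1 z hz, mul_assoc]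
        · have hz1 := hm2 x hx
          have hz2 := hn2 x hx
          have key : x⁻¹ * (m * n)⁻¹ * x * (m * n)
              = (x⁻¹ * n⁻¹ * x * n) * (n⁻¹ * (x⁻¹ * m⁻¹ * x * m) * n) := by group
          have hfix : n⁻¹ * (x⁻¹ * m⁻¹ * x * m) * n = x⁻¹ * m⁻¹ * x * m := by
            have h := hn1 _ hz1
            calc n⁻¹ * (x⁻¹ * m⁻¹ * x * m) * n = n⁻¹ * ((x⁻¹ * m⁻¹ * x * m) * n) := by group
              _ = n⁻¹ * (n * (x⁻¹ * m⁻¹ * x * m)) := by rw [← h]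
              _ = x⁻¹ * m⁻¹ * x * m := by group
          rw [key, hfix]
          exact Z.mul_mem hz2 hz1
      inv_mem' := by
        rintro m ⟨hm1, hm2⟩
        refine ⟨fun z hz => ?_, fun x hx => ?_⟩
        · have := hm1 z hz
          calc m⁻¹ * z = m⁻¹ * (z * m) * m⁻¹ := by group
            _ = m⁻¹ * (m * z) * m⁻¹ := by rw [← this]
            _ = z * m⁻¹ := by group
        · have hy : m * x * m⁻¹ ∈ P := hP.1.conj_mem x hx m
          have h := hm2 _ hy
          have key : x⁻¹ * m⁻¹⁻¹ * x * m⁻¹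
              = ((m * x * m⁻¹)⁻¹ * m⁻¹ * (m * x * m⁻¹) * m)⁻¹ := by group
          rw [key]
          exact Z.inv_mem h } with hKdef
  have hKmem : ∀ m : M, m ∈ K ↔
      (∀ z ∈ Z, m * z = z * m) ∧ ∀ x ∈ P, x⁻¹ * m⁻¹ * x * m ∈ Z := fun m => Iff.rfl
  -- K is normal
  have hKnormal : K.Normal := by
    constructor
    intro k hk g
    obtain ⟨hk1, hk2⟩ := (hKmem k).mp hk
    refine (hKmem _).mpr ⟨fun z hz => ?_, fun x hx => ?_⟩
    · have hz' : g⁻¹ * z * g ∈ Z := by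
        have := hZ.conj_mem z hz g⁻¹
        simpa using this
      have h1 := hk1 _ hz'
      calc g * k * g⁻¹ * z = g * (k * (g⁻¹ * z * g)) * g⁻¹ := by group
        _ = g * ((g⁻¹ * z * g) * k) * g⁻¹ := by rw [h1]
        _ = z * (g * k * g⁻¹) := by group
    · have hy : g⁻¹ * x * g ∈ P := by
        have := hP.1.conj_mem x hx g⁻¹
        simpa using this
      have h2 := hk2 _ hy
      have key : x⁻¹ * (g * k * g⁻¹)⁻¹ * x * (g * k * g⁻¹)
          = g * ((g⁻¹ * x * g)⁻¹ * k⁻¹ * (g⁻¹ * x * g) * k) * g⁻¹ := by group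
      rw [key]
      exact hZ.conj_mem _ h2 g
  -- K is a p-group
  have hKp : IsPGroup p ↥K := by
    intro ⟨k, hk⟩
    obtain ⟨hk1, hk2⟩ := (hKmem k).mp hk
    have hkp : k ^ p ∈ Subgroup.centralizer (P : Set M) := by
      rw [Subgroup.mem_centralizer_iff]
      intro x hx
      have hz := hk2 x hx
      set z : M := x⁻¹ * k⁻¹ * x * k with hzdef
      have hconj : k⁻¹ * x * k = x * z := by rw [hzdef]; group
      have hcz : k * z = z * k := hk1 z hz
      have hn : ∀ n : ℕ, (k ^ n)⁻¹ * x * k ^ n = x * z ^ n := by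
        intro n
        induction n with
        | zero => simp
        | succ n ih =>
          have hczn : k * z ^ n = z ^ n * k :=
            (show Commute k z from hcz).pow_right n
          calc (k ^ (n + 1))⁻¹ * x * k ^ (n + 1)
              = k⁻¹ * ((k ^ n)⁻¹ * x * k ^ n) * k := by rw [pow_succ]; group
            _ = k⁻¹ * (x * z ^ n) * k := by rw [ih]
            _ = (k⁻¹ * x * k) * (k⁻¹ * z ^ n * k) := by group
            _ = (x * z) * z ^ n := by
                rw [hconj]
                congr 1
                calc k⁻¹ * z ^ n * k = k⁻¹ * (z ^ n * k) := by group
                  _ = k⁻¹ * (k * z ^ n) := by rw [hczn]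
                  _ = z ^ n := by group
            _ = x * z ^ (n + 1) := by rw [pow_succ]; group
      have hzp1 : z ^ p = 1 := hzp z hz
      have := hn p
      rw [hzp1, mul_one] at this
      calc x * k ^ p = k ^ p * ((k ^ p)⁻¹ * x * k ^ p) := by group
        _ = k ^ p * x := by rw [this]
    have hkpP : k ^ p ∈ P := hchar hkp
    obtain ⟨n, hn⟩ := hP.2.1 ⟨k ^ p, hkpP⟩
    refine ⟨n + 1, ?_⟩
    have hcoe : ((⟨k, hk⟩ : K) ^ p ^ (n + 1) : K) = ⟨k ^ p ^ (n + 1), _⟩ := rfl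
    have hv := congrArg Subtype.val hn
    simp only [SubmonoidClass.coe_pow, OneMemClass.coe_one] at hv
    ext
    simp only [SubmonoidClass.coe_pow, OneMemClass.coe_one]
    calc k ^ p ^ (n + 1) = (k ^ p) ^ p ^ n := by rw [← pow_mul, pow_succ']
      _ = 1 := hv
  -- hence K ≤ P
  have hKP : K ≤ P := hP.2.2 K hKnormal hKp
  -- S ≤ K
  have hSK : Sg ≤ K := by
    intro s hs
    refine (hKmem s).mpr ⟨fun z hz => ?_, fun x hx => ?_⟩
    · exact Subgroup.mem_centralizer_iff.mp (Subgroup.mem_inf.mp hz).2 s hs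
    · have hxS : x ∈ Sg := hPle hx
      have := hcomm x⁻¹ (Sg.inv_mem hxS) s⁻¹ (Sg.inv_mem hs)
      simpa using this
  -- conclude: P = S
  have hSP : Sg ≤ P := le_trans hSK hKP
  have hPS : P = Sg := S.3 hP.2.1 hSP
  have : Sg.Normal := hPS ▸ hP.1
  exact this
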